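/- If list L of rectangles is r-homogenous to list L' (both lists use widths from the same finite set w_1 > w_2 > ... > w_q, and for each width w_i the total height of rectangles of width w_i in L is at least the total height in L' and at most r times it), then the optimal fractional strip packing heights satisfy OPT_FSP(L') ≤ OPT_FSP(L) ≤ r · OPT_FSP(L'). -/

import Mathlib

/-- A rectangle is a pair (width, height). A packing of list `L` into the
width-1 strip at height `H`: axis-parallel placements, no overlap. -/
structure StripPacking (L : List (ℝ × ℝ)) (H : ℝ) where
  pos : Fin L.length → ℝ × ℝ
  left : ∀ i, 0 ≤ (pos i).1
  right : ∀ i, (pos i).1 + (L.get i).1 ≤ 1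
  bottom : ∀ i, 0 ≤ (pos i).2
  top : ∀ i, (pos i).2 + (L.get i).2 ≤ H
  disjoint : ∀ i j, i ≠ j →
    (pos i).1 + (L.get i).1 ≤ (pos j).1 ∨ (pos j).1 + (L.get j).1 ≤ (pos i).1 ∨
    (pos i).2 + (L.get i).2 ≤ (pos j).2 ∨ (pos j).2 + (L.get j).2 ≤ (pos i).2

/-- `L'` is obtained from `L` by horizontal cuts: each rectangle `(w,h)` is
replaced by `(w,h₁),…,(w,h_k)` with `h = h₁+⋯+h_k`, all pieces positive. -/
def IsSubdivision (L L' : List (ℝ × ℝ)) : Prop :=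
  ∃ css : List (List ℝ), css.length = L.length ∧
    (∀ p ∈ L.zip css, p.2.sum = p.1.2 ∧ ∀ hh ∈ p.2, 0 < hh) ∧
    L' = (L.zip css).flatMap (fun p => p.2.map fun hh => (p.1.1, hh))

/-- Optimal fractional strip packing height of `L`. -/
noncomputable def OPTFSP (L : List (ℝ × ℝ)) : ℝ :=
  sInf {H | 0 ≤ H ∧ ∃ L', IsSubdivision L L' ∧ Nonempty (StripPacking L' H)}

/-- Total height of rectangles of width `w` in `L`. -/
noncomputable def heightAt (L : List (ℝ × ℝ)) (w : ℝ) : ℝ :=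
  ((L.filter (fun R => R.1 = w)).map Prod.snd).sum

/-- `L` is `r`-homogenous to `L'`: both lists use widths from a common finite
set `W`, and for each `w ∈ W` the total height in `L` lies between the total
height in `L'` and `r` times it. -/
def Homogenous (r : ℝ) (L L' : List (ℝ × ℝ)) : Prop :=
  ∃ W : Finset ℝ, (∀ R ∈ L, R.1 ∈ W) ∧ (∀ R ∈ L', R.1 ∈ W) ∧
    ∀ w ∈ W, heightAt L' w ≤ heightAt L w ∧ heightAt L w ≤ r * heightAt L' w



/-- Disjointness of allocated pieces: different parent, or disjoint intervals. -/
def Disj {n : ℕ} (e f : ℝ × Fin n × ℝ) : Prop :=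
  e.2.1 ≠ f.2.1 ∨ e.2.2 + e.1 ≤ f.2.2 ∨ f.2.2 + f.1 ≤ e.2.2

lemma alloc_list {n : ℕ} (Hj : Fin n → ℝ) :
    ∀ (js : List (Fin n)) (used : Fin n → ℝ) (h : ℝ), js.Nodup → 0 < h →
    (∀ j, used j ≤ Hj j) →
    h ≤ (js.map (fun j => Hj j - used j)).sum →
    ∃ (d : List (ℝ × Fin n × ℝ)) (used' : Fin n → ℝ),
      (d.map (·.1)).sum = h ∧
      (∀ e ∈ d, 0 < e.1 ∧ e.2.1 ∈ js ∧ used e.2.1 ≤ e.2.2 ∧ e.2.2 + e.1 ≤ used' e.2.1) ∧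
      d.Pairwise Disj ∧
      (∀ j, used j ≤ used' j ∧ used' j ≤ Hj j) ∧
      (∀ j, j ∉ js → used' j = used j) ∧
      (js.map (fun j => Hj j - used' j)).sum = (js.map (fun j => Hj j - used j)).sum - h := by
  intro js
  induction js with
  | nil =>
    intro used h _ hh _ hcap
    simp at hcap; linarith
  | cons j rest ih =>
    intro used h hnd hh hused hcap
    have hjrest : j ∉ rest := (List.nodup_cons.1 hnd).1
    have hndr : rest.Nodup := (List.nodup_cons.1 hnd).2
    by_cases hc : h ≤ Hj j - used j
    · -- fits entirely in j
      refine ⟨[(h, j, used j)], Function.update used j (used j + h), ?_, ?_, ?_, ?_, ?_, ?_⟩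
      · simp
      · intro e he
        simp only [List.mem_singleton] at he
        subst he
        refine ⟨hh, by simp, le_refl _, by simp⟩
      · simp [List.pairwise_singleton]
      · intro j'
        by_cases hj' : j' = j
        · subst hj'; simp; constructor <;> linarith
        · rw [Function.update_of_ne hj']; exact ⟨le_refl _, hused j'⟩
      · intro j' hj'
        have : j' ≠ j := fun hcon => hj' (hcon ▸ List.mem_cons_self)
        simp [Function.update_of_ne this]
      · have hr : (rest.map (fun j' => Hj j' - Function.update used j (used j + h) j')).sum
            = (rest.map (fun j' => Hj j' - used j')).sum := by
          apply congrArg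
          apply List.map_congr_left
          intro a ha
          have : a ≠ j := fun hcon => hjrest (hcon ▸ ha)
          rw [Function.update_of_ne this]
        simp only [List.map_cons, List.sum_cons, hr, Function.update_self]
        ring
    · push_neg at hc
      by_cases hc0 : Hj j - used j ≤ 0
      · -- skip j
        have hcap' : h ≤ (rest.map (fun j' => Hj j' - used j')).sum := by
          simp only [List.map_cons, List.sum_cons] at hcap; linarith
        obtain ⟨d, used', h1, h2, h3, h4, h5, h6⟩ := ih used h hndr hh hused hcap'
        refine ⟨d, used', h1, ?_, h3, h4, ?_, ?_⟩
        · intro e he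
          obtain ⟨p1, p2, p3, p4⟩ := h2 e he
          exact ⟨p1, List.mem_cons_of_mem _ p2, p3, p4⟩
        · intro j' hj'
          exact h5 j' (fun hcon => hj' (List.mem_cons_of_mem _ hcon))
        · have hju : used' j = used j := h5 j hjrest
          simp only [List.map_cons, List.sum_cons, hju, h6]
          ring
      · -- use all of j's capacity, recurse
        push_neg at hc0
        have hcap' : h - (Hj j - used j) ≤ (rest.map (fun j' => Hj j' - used j')).sum := by
          simp only [List.map_cons, List.sum_cons] at hcap; linarith
        obtain ⟨d, u', h1, h2, h3, h4, h5, h6⟩ := ih used (h - (Hj j - used j)) hndr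
          (by linarith) hused hcap'
        refine ⟨(Hj j - used j, j, used j) :: d, Function.update u' j (Hj j), ?_, ?_, ?_, ?_, ?_, ?_⟩
        · simp only [List.map_cons, List.sum_cons, h1]; ring
        · intro e he
          rcases List.mem_cons.1 he with he | he
          · subst he
            refine ⟨hc0, by simp, le_refl _, by simp⟩
          · obtain ⟨p1, p2, p3, p4⟩ := h2 e he
            have hne : e.2.1 ≠ j := fun hcon => hjrest (hcon ▸ p2)
            exact ⟨p1, List.mem_cons_of_mem _ p2, p3, by rw [Function.update_of_ne hne]; exact p4⟩
        · rw [List.pairwise_cons]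
          refine ⟨?_, h3⟩
          intro e he
          obtain ⟨_, p2, _, _⟩ := h2 e he
          have hne : e.2.1 ≠ j := fun hcon => hjrest (hcon ▸ p2)
          exact Or.inl hne.symm
        · intro j'
          by_cases hj' : j' = j
          · subst hj'; simp [hused j']
          · rw [Function.update_of_ne hj']; exact h4 j'
        · intro j' hj'
          have h1' : j' ≠ j := fun hcon => hj' (hcon ▸ List.mem_cons_self)
          have h2' : j' ∉ rest := fun hcon => hj' (List.mem_cons_of_mem _ hcon)
          rw [Function.update_of_ne h1', h5 j' h2']
        · have hr : (rest.map (fun j' => Hj j' - Function.update u' j (Hj j) j')).sum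
              = (rest.map (fun j' => Hj j' - u' j')).sum := by
            apply congrArg
            apply List.map_congr_left
            intro a ha
            have : a ≠ j := fun hcon => hjrest (hcon ▸ ha)
            rw [Function.update_of_ne this]
          simp only [List.map_cons, List.sum_cons, hr, Function.update_self, h6]
          ring
lemma heightAt_nil (w : ℝ) : heightAt [] w = 0 := rfl

lemma heightAt_cons (a : ℝ × ℝ) (L : List (ℝ × ℝ)) (w : ℝ) :
    heightAt (a :: L) w = (if a.1 = w then a.2 else 0) + heightAt L w := by
  unfold heightAt
  by_cases h : a.1 = w
  · simp [List.filter_cons, h]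
  · simp [List.filter_cons, h]

lemma heightAt_eq_sum (L : List (ℝ × ℝ)) (w : ℝ) :
    heightAt L w = (L.map (fun p => if p.1 = w then p.2 else 0)).sum := by
  induction L with
  | nil => rfl
  | cons a L ih => rw [heightAt_cons, ih]; simp

lemma heightAt_nonneg {L : List (ℝ × ℝ)} (hL : ∀ R ∈ L, 0 < R.2) (w : ℝ) :
    0 ≤ heightAt L w := by
  rw [heightAt_eq_sum]
  apply List.sum_nonneg
  intro x hx
  obtain ⟨p, hp, rfl⟩ := List.mem_map.1 hx
  split
  · exact (hL p hp).le
  · exact le_refl 0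

lemma heightAt_fin (L : List (ℝ × ℝ)) (w : ℝ) :
    heightAt L w = ∑ j : Fin L.length, if (L.get j).1 = w then (L.get j).2 else 0 := by
  rw [heightAt_eq_sum]
  induction L with
  | nil => simp
  | cons a L ih => simp [Fin.sum_univ_succ, ih] <;> split_ifs <;> simp_all

lemma sum_flatMap' {α β : Type*} [AddCommMonoid β] (l : List α) (f : α → List β) :
    (l.flatMap f).sum = (l.map (fun a => (f a).sum)).sum := by
  induction l with
  | nil => simp
  | cons a l ih => simp [List.flatMap_cons, ih]

lemma heightAt_subdivision {L L' : List (ℝ × ℝ)}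
    (h : ∃ css : List (List ℝ), css.length = L.length ∧
      (∀ p ∈ L.zip css, p.2.sum = p.1.2 ∧ ∀ hh ∈ p.2, 0 < hh) ∧
      L' = (L.zip css).flatMap (fun p => p.2.map fun hh => (p.1.1, hh)))
    (w : ℝ) : heightAt L' w = heightAt L w := by
  obtain ⟨css, hlen, hsum, rfl⟩ := h
  rw [heightAt_eq_sum, heightAt_eq_sum, List.map_flatMap, sum_flatMap']
  have hstep : ((L.zip css).map fun p =>
      ((p.2.map fun hh => (p.1.1, hh)).map fun q => if q.1 = w then q.2 else 0).sum)
      = (L.zip css).map (fun p => if p.1.1 = w then p.1.2 else 0) := by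
    apply List.map_congr_left
    intro p hp
    rw [List.map_map]
    by_cases hw : p.1.1 = w
    · have : ((fun q : ℝ × ℝ => if q.1 = w then q.2 else 0) ∘ fun hh => (p.1.1, hh))
          = fun hh => hh := by
        funext hh; simp [Function.comp, hw]
      rw [this, if_pos hw]; simpa using (hsum p hp).1
    · have : ((fun q : ℝ × ℝ => if q.1 = w then q.2 else 0) ∘ fun hh => (p.1.1, hh))
          = fun _ => (0 : ℝ) := by
        funext hh; simp [Function.comp, hw]
      rw [this, if_neg hw]
      simp
  rw [hstep]
  have : (L.zip css).map (fun p => if p.1.1 = w then p.1.2 else 0)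
      = ((L.zip css).map Prod.fst).map (fun p => if p.1 = w then p.2 else 0) := by
    rw [List.map_map]; rfl
  rw [this, List.map_fst_zip (le_of_eq hlen.symm)]
lemma sum_toList' {ι : Type*} (s : Finset ι) (f : ι → ℝ) :
    (s.toList.map f).sum = s.sum f := by
  rw [← Multiset.sum_coe, ← Multiset.map_coe, Finset.coe_toList]
  rfl

lemma main_alloc {n : ℕ} (Wd Hj : Fin n → ℝ) :
    ∀ (A : List (ℝ × ℝ)) (used : Fin n → ℝ),
    (∀ a ∈ A, 0 < a.2) →
    (∀ j, used j ≤ Hj j) →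
    (∀ w, heightAt A w ≤ ∑ j ∈ Finset.univ.filter (fun j => Wd j = w), (Hj j - used j)) →
    ∃ D : List (List (ℝ × Fin n × ℝ)),
      D.length = A.length ∧
      (∀ p ∈ A.zip D, ((p.2.map (·.1)).sum = p.1.2 ∧
        ∀ e ∈ p.2, 0 < e.1 ∧ Wd e.2.1 = p.1.1 ∧ used e.2.1 ≤ e.2.2 ∧ e.2.2 + e.1 ≤ Hj e.2.1)) ∧
      D.flatten.Pairwise Disj := by
  intro A
  induction A with
  | nil =>
    intro used _ _ _
    exact ⟨[], rfl, by simp, by simp⟩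
  | cons a A ih =>
    intro used hA hused hcap
    set js := (Finset.univ.filter (fun j => Wd j = a.1)).toList with hjs
    have hnd : js.Nodup := Finset.nodup_toList _
    have hmemjs : ∀ j, j ∈ js ↔ Wd j = a.1 := by
      intro j; rw [hjs, Finset.mem_toList, Finset.mem_filter]
      simp
    have hsum_js : ∀ u : Fin n → ℝ, (js.map (fun j => Hj j - u j)).sum
        = ∑ j ∈ Finset.univ.filter (fun j => Wd j = a.1), (Hj j - u j) := by
      intro u; rw [hjs, sum_toList']
    have ha2 : 0 < a.2 := hA a (List.mem_cons_self)
    have hApos : ∀ R ∈ A, 0 < R.2 := fun R hR => hA R (List.mem_cons_of_mem _ hR)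
    have hcap1 : a.2 ≤ (js.map (fun j => Hj j - used j)).sum := by
      rw [hsum_js]
      have := hcap a.1
      rw [heightAt_cons] at this
      have h0 : 0 ≤ heightAt A a.1 := heightAt_nonneg hApos a.1
      rw [if_pos rfl] at this
      linarith
    obtain ⟨d, used', hd1, hd2, hd3, hd4, hd5, hd6⟩ :=
      alloc_list Hj js used a.2 hnd ha2 hused hcap1
    have hcap' : ∀ w, heightAt A w ≤
        ∑ j ∈ Finset.univ.filter (fun j => Wd j = w), (Hj j - used' j) := by
      intro w
      by_cases hw : w = a.1
      · subst hw
        rw [← hsum_js, hd6, hsum_js]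
        have := hcap a.1
        rw [heightAt_cons, if_pos rfl] at this
        linarith
      · have : ∑ j ∈ Finset.univ.filter (fun j => Wd j = w), (Hj j - used' j)
            = ∑ j ∈ Finset.univ.filter (fun j => Wd j = w), (Hj j - used j) := by
          apply Finset.sum_congr rfl
          intro j hj
          have hWj : Wd j = w := (Finset.mem_filter.1 hj).2
          have : j ∉ js := by
            rw [hmemjs, hWj]; exact fun h => hw h
          rw [hd5 j this]
        rw [this]
        have := hcap w
        rw [heightAt_cons, if_neg (fun h => hw h.symm)] at this
        linarith
    obtain ⟨D, hD1, hD2, hD3⟩ := ih used' hApos (fun j => (hd4 j).2) hcap'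
    have hDmem : ∀ f ∈ D.flatten, used' f.2.1 ≤ f.2.2 := by
      intro f hf
      obtain ⟨l, hl, hfl⟩ := List.mem_flatten.1 hf
      have : l ∈ (A.zip D).map Prod.snd := by
        rw [List.map_snd_zip (le_of_eq hD1)]; exact hl
      obtain ⟨p, hp, rfl⟩ := List.mem_map.1 this
      exact ((hD2 p hp).2 f hfl).2.2.1
    refine ⟨d :: D, by simp [hD1], ?_, ?_⟩
    · intro p hp
      rw [List.zip_cons_cons] at hp
      rcases List.mem_cons.1 hp with hp | hp
      · subst hp
        refine ⟨hd1, ?_⟩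
        intro e he
        obtain ⟨p1, p2, p3, p4⟩ := hd2 e he
        exact ⟨p1, (hmemjs e.2.1).1 p2, p3, le_trans p4 (hd4 e.2.1).2⟩
      · obtain ⟨hs, hel⟩ := hD2 p hp
        refine ⟨hs, ?_⟩
        intro e he
        obtain ⟨p1, p2, p3, p4⟩ := hel e he
        exact ⟨p1, p2, le_trans (hd4 e.2.1).1 p3, p4⟩
    · rw [List.flatten_cons, List.pairwise_append]
      refine ⟨hd3, hD3, ?_⟩
      intro e he f hf
      by_cases hpar : e.2.1 = f.2.1
      · right; left
        calc e.2.2 + e.1 ≤ used' e.2.1 := (hd2 e he).2.2.2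
          _ = used' f.2.1 := by rw [hpar]
          _ ≤ f.2.2 := hDmem f hf
      · exact Or.inl hpar
lemma flatMap_congr' {α β : Type*} {l : List α} {f g : α → List β}
    (h : ∀ a ∈ l, f a = g a) : l.flatMap f = l.flatMap g := by
  rw [List.flatMap, List.flatMap, List.map_congr_left h]

lemma carve (B : List (ℝ × ℝ)) (H : ℝ) (P : StripPacking B H)
    (hB : ∀ b ∈ B, 0 ≤ b.2)
    (A : List (ℝ × ℝ)) (hA : ∀ a ∈ A, 0 < a.2)
    (hcap : ∀ w, heightAt A w ≤ heightAt B w) :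
    ∃ A'', IsSubdivision A A'' ∧ Nonempty (StripPacking A'' H) := by
  classical
  set n := B.length with hn
  set Wd : Fin n → ℝ := fun j => (B.get j).1 with hWd
  set Hj : Fin n → ℝ := fun j => (B.get j).2 with hHj
  have hused : ∀ j, (fun _ : Fin n => (0:ℝ)) j ≤ Hj j := by
    intro j; exact hB _ (List.get_mem B j)
  have hcap' : ∀ w, heightAt A w ≤
      ∑ j ∈ Finset.univ.filter (fun j => Wd j = w), (Hj j - (0:ℝ)) := by
    intro w
    rw [Finset.sum_filter]
    simp only [sub_zero]
    rw [← heightAt_fin B w]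
    exact hcap w
  obtain ⟨D, hD1, hD2, hD3⟩ := main_alloc Wd Hj A (fun _ => 0) hA hused hcap'
  set E : List (ℝ × Fin n × ℝ) := (A.zip D).flatMap (fun p => p.2) with hEdef
  have hEflat : E = D.flatten := by
    rw [hEdef, List.flatMap]
    rw [List.map_snd_zip (le_of_eq hD1)]
  have hEfact : ∀ e ∈ E, 0 < e.1 ∧ 0 ≤ e.2.2 ∧ e.2.2 + e.1 ≤ Hj e.2.1 := by
    intro e he
    obtain ⟨p, hp, hep⟩ := List.mem_flatMap.1 (hEdef ▸ he)
    obtain ⟨p1, _, p3, p4⟩ := (hD2 p hp).2 e hep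
    exact ⟨p1, p3, p4⟩
  have hEpair : E.Pairwise Disj := hEflat ▸ hD3
  set A'' : List (ℝ × ℝ) := E.map (fun e => (Wd e.2.1, e.1)) with hA''
  have hlenE : A''.length = E.length := by rw [hA'', List.length_map]
  have hgetA'' : ∀ i : Fin A''.length,
      A''.get i = (Wd (E.get (Fin.cast hlenE i)).2.1, (E.get (Fin.cast hlenE i)).1) := by
    intro i
    simp [hA'', List.get_eq_getElem, List.getElem_map, Fin.cast]
  have hmemE : ∀ i : Fin E.length, E.get i ∈ E := fun i => List.get_mem E i
  refine ⟨A'', ?_, ?_⟩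
  · -- subdivision
    refine ⟨D.map (List.map (·.1)), by rw [List.length_map, hD1], ?_, ?_⟩
    · intro p hp
      rw [List.zip_map_right] at hp
      obtain ⟨q, hq, rfl⟩ := List.mem_map.1 hp
      refine ⟨(hD2 q hq).1, ?_⟩
      intro hh hhh
      simp only [Prod.map] at hhh
      obtain ⟨e, he, rfl⟩ := List.mem_map.1 hhh
      exact ((hD2 q hq).2 e he).1
    · rw [List.zip_map_right, List.flatMap_map, hA'', hEdef, List.map_flatMap]
      apply flatMap_congr'
      intro q hq
      simp only [Function.comp, Prod.map, id_eq, List.map_map]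
      apply List.map_congr_left
      intro e he
      rw [((hD2 q hq).2 e he).2.1]
      rfl
  · -- packing
    refine ⟨⟨fun i =>
      ((P.pos (E.get (Fin.cast hlenE i)).2.1).1,
        (P.pos (E.get (Fin.cast hlenE i)).2.1).2 + (E.get (Fin.cast hlenE i)).2.2),
      ?_, ?_, ?_, ?_, ?_⟩⟩
    · intro i; exact P.left _
    · intro i
      rw [hgetA'' i]
      exact P.right _
    · intro i
      have := hEfact _ (hmemE (Fin.cast hlenE i))
      have hb := P.bottom (E.get (Fin.cast hlenE i)).2.1
      simp only []
      linarith [this.2.1]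
    · intro i
      rw [hgetA'' i]
      have hf := hEfact _ (hmemE (Fin.cast hlenE i))
      have ht := P.top (E.get (Fin.cast hlenE i)).2.1
      simp only []
      have : (E.get (Fin.cast hlenE i)).2.2 + (E.get (Fin.cast hlenE i)).1
          ≤ Hj (E.get (Fin.cast hlenE i)).2.1 := hf.2.2
      rw [hHj] at this
      linarith
    · intro i i' hne
      rw [hgetA'' i, hgetA'' i']
      set e := E.get (Fin.cast hlenE i) with hedef
      set f := E.get (Fin.cast hlenE i') with hfdef
      have hef : 0 < e.1 ∧ 0 ≤ e.2.2 ∧ e.2.2 + e.1 ≤ Hj e.2.1 :=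
        hEfact _ (hmemE _)
      have hff : 0 < f.1 ∧ 0 ≤ f.2.2 ∧ f.2.2 + f.1 ≤ Hj f.2.1 :=
        hEfact _ (hmemE _)
      by_cases hpar : e.2.1 = f.2.1
      · -- same parent: use Pairwise
        have hij : Fin.cast hlenE i ≠ Fin.cast hlenE i' := by
          intro hcon
          have hvv := congrArg Fin.val hcon
          exact hne (Fin.ext hvv)
        have hdisj : Disj e f ∨ Disj f e := by
          rcases lt_or_gt_of_ne hij with hlt | hgt
          · exact Or.inl (List.pairwise_iff_get.1 hEpair _ _ hlt)
          · exact Or.inr (List.pairwise_iff_get.1 hEpair _ _ hgt)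
        have hint : e.2.2 + e.1 ≤ f.2.2 ∨ f.2.2 + f.1 ≤ e.2.2 := by
          rcases hdisj with hd | hd <;> rcases hd with hd | hd | hd
          · exact absurd hpar hd
          · exact Or.inl hd
          · exact Or.inr hd
          · exact absurd hpar.symm hd
          · exact Or.inr hd
          · exact Or.inl hd
        rcases hint with hd | hd
        · right; right; left
          simp only []
          rw [hpar]
          linarith
        · right; right; right
          simp only []
          rw [hpar]
          linarith
      · -- different parents
        have hyE : (P.pos e.2.1).2 + e.2.2 + e.1 ≤ (P.pos e.2.1).2 + Hj e.2.1 := by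
          linarith [hef.2.2]
        have hyF : (P.pos f.2.1).2 + f.2.2 + f.1 ≤ (P.pos f.2.1).2 + Hj f.2.1 := by
          linarith [hff.2.2]
        rcases P.disjoint e.2.1 f.2.1 hpar with hd | hd | hd | hd
        · left
          simp only []
          rw [hWd] at *
          exact hd
        · right; left
          simp only []
          exact hd
        · right; right; left
          simp only []
          rw [hHj] at hyE
          have := hff.2.1
          linarith
        · right; right; right
          simp only []
          rw [hHj] at hyF
          have := hef.2.1
          linarith
lemma isSubdivision_refl (L : List (ℝ × ℝ)) (h : ∀ R ∈ L, 0 < R.2) :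
    IsSubdivision L L := by
  induction L with
  | nil => exact ⟨[], rfl, by simp, by simp⟩
  | cons a T ih =>
    obtain ⟨css, h1, h2, h3⟩ := ih (fun R hR => h R (List.mem_cons_of_mem _ hR))
    refine ⟨[a.2] :: css, by simp [h1], ?_, ?_⟩
    · intro p hp
      rw [List.zip_cons_cons] at hp
      rcases List.mem_cons.1 hp with hp | hp
      · subst hp
        exact ⟨by simp, by simpa using h a (List.mem_cons_self)⟩
      · exact h2 p hp
    · rw [List.zip_cons_cons, List.flatMap_cons, ← h3]
      simp

/-- pieces of a subdivision have positive heights -/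
lemma subdivision_pos {L L' : List (ℝ × ℝ)} (h : IsSubdivision L L') :
    ∀ b ∈ L', 0 < b.2 := by
  obtain ⟨css, h1, h2, rfl⟩ := h
  intro b hb
  obtain ⟨p, hp, hbp⟩ := List.mem_flatMap.1 hb
  obtain ⟨hh, hhh, rfl⟩ := List.mem_map.1 hbp
  exact (h2 p hp).2 hh hhh

/-- the trivial stacking packing -/
lemma exists_packing_stack (L : List (ℝ × ℝ))
    (hrect : ∀ R ∈ L, 0 < R.1 ∧ R.1 ≤ 1 ∧ 0 < R.2) :
    ∃ H : ℝ, 0 ≤ H ∧ Nonempty (StripPacking L H) := by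
  classical
  set f : ℕ → ℝ := fun k => if hk : k < L.length then (L.get ⟨k, hk⟩).2 else 0 with hf
  have hf0 : ∀ k, 0 ≤ f k := by
    intro k
    by_cases hk : k < L.length
    · rw [hf]; simp only [dif_pos hk]
      exact (hrect _ (List.get_mem L _)).2.2.le
    · rw [hf]; simp only [dif_neg hk]; exact le_refl 0
  have hfv : ∀ i : Fin L.length, f i.1 = (L.get i).2 := by
    intro i; rw [hf]; simp only [dif_pos i.2]
  refine ⟨∑ k ∈ Finset.range L.length, f k, Finset.sum_nonneg (fun k _ => hf0 k), ⟨⟨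
    fun i => (0, ∑ k ∈ Finset.range i.1, f k), ?_, ?_, ?_, ?_, ?_⟩⟩⟩
  · intro i; exact le_refl 0
  · intro i
    dsimp only
    rw [zero_add]
    exact (hrect _ (List.get_mem L i)).2.1
  · intro i; dsimp only; exact Finset.sum_nonneg (fun k _ => hf0 k)
  · intro i
    dsimp only
    rw [← hfv i, ← Finset.sum_range_succ]
    apply Finset.sum_le_sum_of_subset_of_nonneg
    · exact Finset.range_subset_range.2 i.2
    · intro k _ _; exact hf0 k
  · intro i j hij
    have key : ∀ i j : Fin L.length, i.1 < j.1 →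
        (∑ k ∈ Finset.range i.1, f k) + (L.get i).2 ≤ ∑ k ∈ Finset.range j.1, f k := by
      intro i j hlt
      rw [← hfv i, ← Finset.sum_range_succ]
      apply Finset.sum_le_sum_of_subset_of_nonneg
      · exact Finset.range_subset_range.2 hlt
      · intro k _ _; exact hf0 k
    rcases lt_or_gt_of_ne (fun hcon => hij (Fin.ext hcon) : i.1 ≠ j.1) with hlt | hgt
    · right; right; left; exact key i j hlt
    · right; right; right; exact key j i hgt


lemma heightAt_scale (r : ℝ) (B : List (ℝ × ℝ)) (w : ℝ) :
    heightAt (B.map fun R => (R.1, r * R.2)) w = r * heightAt B w := by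
  rw [heightAt_eq_sum, heightAt_eq_sum, List.map_map]
  rw [← List.sum_map_mul_left]
  apply congrArg
  apply List.map_congr_left
  intro R _
  simp only [Function.comp]
  by_cases hw : R.1 = w
  · simp [hw]
  · simp [hw]

lemma scale_packing (r : ℝ) (hr : 0 ≤ r) (B : List (ℝ × ℝ)) (H : ℝ)
    (P : StripPacking B H) :
    Nonempty (StripPacking (B.map fun R => (R.1, r * R.2)) (r * H)) := by
  have hlen : (B.map fun R => (R.1, r * R.2)).length = B.length := List.length_map _
  have hget : ∀ i : Fin (B.map fun R => (R.1, r * R.2)).length,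
      (B.map fun R => (R.1, r * R.2)).get i
        = ((B.get (Fin.cast hlen i)).1, r * (B.get (Fin.cast hlen i)).2) := by
    intro i
    simp [List.get_eq_getElem, List.getElem_map, Fin.cast]
  refine ⟨⟨fun i => ((P.pos (Fin.cast hlen i)).1, r * (P.pos (Fin.cast hlen i)).2),
    ?_, ?_, ?_, ?_, ?_⟩⟩
  · intro i; exact P.left _
  · intro i; rw [hget i]; exact P.right _
  · intro i; exact mul_nonneg hr (P.bottom _)
  · intro i
    rw [hget i]
    have := mul_le_mul_of_nonneg_left (P.top (Fin.cast hlen i)) hr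
    dsimp only
    linarith
  · intro i j hij
    have hne : Fin.cast hlen i ≠ Fin.cast hlen j := by
      intro hcon
      have hvv := congrArg Fin.val hcon
      exact hij (Fin.ext hvv)
    rw [hget i, hget j]
    rcases P.disjoint (Fin.cast hlen i) (Fin.cast hlen j) hne with hd | hd | hd | hd
    · left; exact hd
    · right; left; exact hd
    · right; right; left
      dsimp only
      have := mul_le_mul_of_nonneg_left hd hr
      linarith
    · right; right; right
      dsimp only
      have := mul_le_mul_of_nonneg_left hd hr
      linarith

lemma heightAt_zero {L : List (ℝ × ℝ)} {w : ℝ} (h : ∀ R ∈ L, R.1 ≠ w) :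
    heightAt L w = 0 := by
  rw [heightAt_eq_sum]
  apply List.sum_eq_zero
  intro x hx
  obtain ⟨p, hp, rfl⟩ := List.mem_map.1 hx
  rw [if_neg (h p hp)]

lemma mem_S_transfer (A B : List (ℝ × ℝ)) (hA : ∀ a ∈ A, 0 < a.2)
    (hcap : ∀ w, heightAt A w ≤ heightAt B w) (H : ℝ)
    (hex : ∃ B1, IsSubdivision B B1 ∧ Nonempty (StripPacking B1 H)) :
    ∃ A1, IsSubdivision A A1 ∧ Nonempty (StripPacking A1 H) := by
  obtain ⟨B1, hsub, ⟨P⟩⟩ := hex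
  have hcap' : ∀ w, heightAt A w ≤ heightAt B1 w := by
    intro w
    rw [heightAt_subdivision hsub w]
    exact hcap w
  exact carve B1 H P (fun b hb => (subdivision_pos hsub b hb).le) A hA hcap'

/-- If `L` is `r`-homogenous to `L'` then
`OPT_FSP(L') ≤ OPT_FSP(L) ≤ r · OPT_FSP(L')`. -/
theorem fsp_homogenous (r : ℝ) (hr : 1 ≤ r) (L L' : List (ℝ × ℝ))
    (hrect : ∀ R ∈ L, 0 < R.1 ∧ R.1 ≤ 1 ∧ 0 < R.2)
    (hrect' : ∀ R ∈ L', 0 < R.1 ∧ R.1 ≤ 1 ∧ 0 < R.2)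
    (hhom : Homogenous r L L') :
    OPTFSP L' ≤ OPTFSP L ∧ OPTFSP L ≤ r * OPTFSP L' := by
  classical
  obtain ⟨W, hWL, hWL', hWb⟩ := hhom
  have hrpos : (0:ℝ) < r := lt_of_lt_of_le one_pos hr
  set S : List (ℝ × ℝ) → Set ℝ := fun M =>
    {H | 0 ≤ H ∧ ∃ M1, IsSubdivision M M1 ∧ Nonempty (StripPacking M1 H)} with hS
  have hOPT : ∀ M, OPTFSP M = sInf (S M) := fun M => rfl
  have hbdd : ∀ M, BddBelow (S M) := fun M => ⟨0, fun x hx => hx.1⟩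
  have hLpos : ∀ a ∈ L, 0 < a.2 := fun a ha => (hrect a ha).2.2
  have hL'pos : ∀ a ∈ L', 0 < a.2 := fun a ha => (hrect' a ha).2.2
  have hne : ∀ (M : List (ℝ × ℝ)), (∀ R ∈ M, 0 < R.1 ∧ R.1 ≤ 1 ∧ 0 < R.2) →
      (S M).Nonempty := by
    intro M hM
    obtain ⟨H, hH0, hP⟩ := exists_packing_stack M hM
    exact ⟨H, hH0, M, isSubdivision_refl M (fun R hR => (hM R hR).2.2), hP⟩
  have hcap1 : ∀ w, heightAt L' w ≤ heightAt L w := by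
    intro w
    by_cases hw : w ∈ W
    · exact (hWb w hw).1
    · rw [heightAt_zero (fun R hR hc => hw (by rw [← hc]; exact hWL' R hR)),
        heightAt_zero (fun R hR hc => hw (by rw [← hc]; exact hWL R hR))]
  constructor
  · -- OPTFSP L' ≤ OPTFSP L
    rw [hOPT, hOPT]
    apply csInf_le_csInf (hbdd L') (hne L hrect)
    intro H hH
    exact ⟨hH.1, mem_S_transfer L' L hL'pos hcap1 H hH.2⟩
  · -- OPTFSP L ≤ r * OPTFSP L'
    have hmul : ∀ H ∈ S L', r * H ∈ S L := by
      intro H hH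
      obtain ⟨hH0, L1, hsub, ⟨P⟩⟩ := hH
      obtain ⟨Q⟩ := scale_packing r hrpos.le L1 H P
      have hBpos : ∀ b ∈ (L1.map fun R => (R.1, r * R.2)), 0 ≤ b.2 := by
        intro b hb
        obtain ⟨R, hR, rfl⟩ := List.mem_map.1 hb
        exact mul_nonneg hrpos.le (subdivision_pos hsub R hR).le
      have hcapL : ∀ w, heightAt L w ≤ heightAt (L1.map fun R => (R.1, r * R.2)) w := by
        intro w
        rw [heightAt_scale, heightAt_subdivision hsub w]
        by_cases hw : w ∈ W
        · exact (hWb w hw).2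
        · rw [heightAt_zero (fun R hR hc => hw (by rw [← hc]; exact hWL R hR)),
            heightAt_zero (fun R hR hc => hw (by rw [← hc]; exact hWL' R hR))]
          simp
      obtain ⟨L2, hsub2, hP2⟩ :=
        carve (L1.map fun R => (R.1, r * R.2)) (r * H) Q hBpos L hLpos hcapL
      exact ⟨mul_nonneg hrpos.le hH0, L2, hsub2, hP2⟩
    rw [hOPT, hOPT]
    have h2 : sInf (S L) / r ≤ sInf (S L') := by
      apply le_csInf (hne L' hrect')
      intro H hH
      rw [div_le_iff₀ hrpos]
      have := csInf_le (hbdd L) (hmul H hH)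
      linarith
    rw [div_le_iff₀ hrpos] at h2
    linarith
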